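/- arXiv:2009.06552 — 2 statements merged into one kernel-verified Lean document; each statement's English description precedes it below -/
import Mathlib

section
/- Let ρ ∈ (0,1). There exists θ = θ(ρ) ∈ (0,1) such that: if I is an interval of length λ > 1 partitioned into finitely many 'good' and 'bad' subintervals J₁,…,Jₙ satisfying (1) any two good intervals Jᵢ, Jⱼ satisfy d(Jᵢ,Jⱼ) ≥ (min{|Jᵢ|,|Jⱼ|})^{1+ρ}, (2) every good interval has length at most (3/4)λ, and (3) every bad interval has length at least 1, then the total length of the bad intervals is at least θλ. -/
set_option maxHeartbeats 1600000


/-- Existence of large intervals, Solovay / Ratner.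
Given `ρ ∈ (0,1)`, there is `θ = θ(ρ) ∈ (0,1)` such that: whenever an interval of
length `λ > 1` is partitioned into finitely many consecutive subintervals
`J i = [a i, b i]` (so `a 0 = 0`, `b i = a (i+1)`, `b (n-1) = λ`), each labelled
good or bad, with
(1) any two good intervals `J i, J j` (`i < j`) satisfying the effective-gap
    condition `a j - b i ≥ (min (|J i|) (|J j|))^(1+ρ)`,
(2) every good interval of length at most `(3/4)·λ`, and
(3) every bad interval of length at least `1`,
then the total length of the bad intervals is at least `θ·λ`. -/
theorem stmt0 (ρ : ℝ) (hρ : ρ ∈ Set.Ioo (0:ℝ) 1) :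
    ∃ θ ∈ Set.Ioo (0:ℝ) 1,
      ∀ (lam : ℝ), 1 < lam →
      ∀ (n : ℕ), 0 < n →
      ∀ (a b : Fin n → ℝ) (good : Fin n → Bool),
        (∀ i, a i ≤ b i) →
        (∀ i : Fin n, ∀ h : (i : ℕ) + 1 < n, b i = a ⟨(i : ℕ) + 1, h⟩) →
        (∀ i : Fin n, (i : ℕ) = 0 → a i = 0) →
        (∀ i : Fin n, (i : ℕ) = n - 1 → b i = lam) →
        (∀ i j : Fin n, good i = true → good j = true → i < j →
          (min (b i - a i) (b j - a j)) ^ ((1:ℝ) + ρ) ≤ a j - b i) →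
        (∀ i, good i = true → b i - a i ≤ (3/4) * lam) →
        (∀ i, good i = false → 1 ≤ b i - a i) →
        θ * lam ≤ ∑ i ∈ Finset.univ.filter (fun i => good i = false), (b i - a i) := by
  classical
  obtain ⟨hρ0, hρ1⟩ := hρ
  have h1ρ : (0:ℝ) < 1 + ρ := by linarith
  set α : ℝ := (1 + ρ)⁻¹ with hα_def
  set β : ℝ := 1 - α with hβ_def
  have hα0 : 0 < α := by positivity
  have hα1 : α < 1 := by
    rw [hα_def]
    rw [inv_lt_one_iff₀]
    right; linarith
  have hβ0 : 0 < β := by rw [hβ_def]; linarith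
  have hβ1 : β < 1 := by rw [hβ_def]; linarith
  have hαβ : α + β = 1 := by rw [hβ_def]; ring
  -- the harmonic-type estimate : ∑_{r=1}^m r^{-α} ≤ m^β / β
  have hH : ∀ m : ℕ, ∑ r ∈ Finset.Ico 1 (m+1), (((r:ℝ) ^ α)⁻¹) ≤ (m:ℝ) ^ β / β := by
    intro m
    induction m with
    | zero => simp [Real.zero_rpow hβ0.ne']
    | succ m ih =>
      rw [Finset.sum_Ico_succ_top (by omega)]
      set x : ℝ := (m:ℝ) with hx_def
      have hx0 : (0:ℝ) ≤ x := Nat.cast_nonneg m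
      have hy0 : (0:ℝ) < x + 1 := by linarith
      have hcast : ((m+1:ℕ):ℝ) = x + 1 := by push_cast; ring
      rw [hcast]
      -- key : β * (x+1)^{β-1} ≤ (x+1)^β - x^β
      have hgm : (x/(x+1)) ^ β * (1:ℝ) ^ (1-β) ≤ β * (x/(x+1)) + (1-β) * 1 :=
        Real.geom_mean_le_arith_mean2_weighted hβ0.le (by linarith) (by positivity)
          zero_le_one (by ring)
      have hxy : x = (x+1) * (x/(x+1)) := by field_simp
      have hxpow : x ^ β = (x+1) ^ β * (x/(x+1)) ^ β := by
        rw [← Real.mul_rpow hy0.le (by positivity : (0:ℝ) ≤ x/(x+1)), ← hxy]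
      have h1pow : (1:ℝ) ^ (1-β) = 1 := Real.one_rpow _
      have hkey : x ^ β ≤ (x+1) ^ β * (β * (x/(x+1)) + (1-β)) := by
        rw [hxpow]
        have h2 : (x/(x+1)) ^ β ≤ β * (x/(x+1)) + (1-β) := by
          rw [h1pow, mul_one] at hgm; linarith
        have h3 : (0:ℝ) ≤ (x+1) ^ β := Real.rpow_nonneg hy0.le _
        nlinarith
      have hyβpos : (0:ℝ) < (x+1) ^ β := Real.rpow_pos_of_pos hy0 _
      have hterm : ((x+1) ^ α)⁻¹ = (x+1) ^ β / (x+1) := by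
        rw [← Real.rpow_neg hy0.le, show -α = β - 1 by rw [hβ_def]; ring,
          Real.rpow_sub hy0, Real.rpow_one]
      have hdiff : β * ((x+1) ^ β / (x+1)) ≤ (x+1) ^ β - x ^ β := by
        have expand : (x+1) ^ β * (β * (x/(x+1)) + (1-β))
            = (x+1) ^ β - β * ((x+1) ^ β / (x+1)) := by
          field_simp
          ring
        rw [expand] at hkey
        linarith
      rw [hterm]
      have : ((x+1) ^ β / (x+1)) ≤ ((x+1) ^ β - x ^ β) / β := by
        rw [le_div_iff₀ hβ0]
        calc (x+1) ^ β / (x+1) * β = β * ((x+1) ^ β / (x+1)) := by ring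
          _ ≤ (x+1) ^ β - x ^ β := hdiff
      calc ∑ r ∈ Finset.Ico 1 (m+1), (((r:ℝ) ^ α)⁻¹) + (x+1) ^ β / (x+1)
          ≤ x ^ β / β + ((x+1) ^ β - x ^ β) / β := add_le_add ih this
        _ = (x+1) ^ β / β := by rw [← add_div]; congr 1; ring
  -- the constant
  set θ : ℝ := min (1/16 : ℝ) ((β/16) ^ (β⁻¹ : ℝ)) with hθ_def
  have hθ0 : 0 < θ := lt_min (by norm_num) (Real.rpow_pos_of_pos (by linarith) _)
  have hθ116 : θ ≤ 1/16 := min_le_left _ _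
  have hθβ : θ ^ β ≤ β/16 := by
    calc θ ^ β ≤ ((β/16) ^ (β⁻¹ : ℝ)) ^ β :=
          Real.rpow_le_rpow hθ0.le (min_le_right _ _) hβ0.le
      _ = β/16 := Real.rpow_inv_rpow (by linarith) hβ0.ne'
  refine ⟨θ, ⟨hθ0, lt_of_le_of_lt hθ116 (by norm_num)⟩, ?_⟩
  intro lam hlam n hn a b good hab hcons h0 hlast hgap hgood34 hbad1
  have hlam0 : (0:ℝ) < lam := by linarith
  -- extended endpoint function
  set f : ℕ → ℝ := fun k => if h : k < n then a ⟨k, h⟩ else lam with hf_def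
  have hfa : ∀ i : Fin n, f i.val = a i := fun i => dif_pos i.isLt
  have hfb : ∀ i : Fin n, f (i.val + 1) = b i := by
    intro i
    by_cases h : i.val + 1 < n
    · exact (dif_pos h).trans (hcons i h).symm
    · exact (dif_neg h).trans (hlast i (by omega)).symm
  have hf0 : f 0 = 0 := (dif_pos hn).trans (h0 ⟨0, hn⟩ rfl)
  have hfn : ∀ k, n ≤ k → f k = lam := fun k h => dif_neg (by omega)
  have hfmono : Monotone f := by
    apply monotone_nat_of_le_succ
    intro k
    by_cases h : k < n
    · have h1 : f k = a ⟨k, h⟩ := hfa ⟨k, h⟩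
      have h2 : f (k+1) = b ⟨k, h⟩ := hfb ⟨k, h⟩
      rw [h1, h2]; exact hab _
    · rw [hfn k (by omega), hfn (k+1) (by omega)]
  have hba : ∀ i j : Fin n, i < j → b i ≤ a j := by
    intro i j hij
    rw [← hfb i, ← hfa j]
    exact hfmono (by exact_mod_cast hij)
  have ha0 : ∀ i : Fin n, 0 ≤ a i := by
    intro i; rw [← hfa i, ← hf0]; exact hfmono (Nat.zero_le _)
  have hblam : ∀ i : Fin n, b i ≤ lam := by
    intro i; rw [← hfb i, ← hfn n le_rfl]; exact hfmono i.isLt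
  -- telescoping identities
  have hsum_total : ∑ i : Fin n, (b i - a i) = lam := by
    have h1 : ∑ i : Fin n, (b i - a i) = ∑ i : Fin n, (f (i.val+1) - f i.val) :=
      Finset.sum_congr rfl (fun i _ => by rw [hfa i, hfb i])
    rw [h1, Fin.sum_univ_eq_sum_range (fun k => f (k+1) - f k) n,
      Finset.sum_range_sub, hf0, hfn n le_rfl, sub_zero]
  have hgapsum : ∀ i j : Fin n, i < j →
      a j - b i = ∑ k ∈ Finset.Ico (i.val+1) j.val, (f (k+1) - f k) := by
    intro i j hij
    have hij' : i.val + 1 ≤ j.val := by exact_mod_cast hij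
    rw [Finset.sum_Ico_eq_sub _ hij', Finset.sum_range_sub, Finset.sum_range_sub,
      ← hfa j, ← hfb i]
    ring
  -- positivity extraction helper
  have hexpos : ∀ i j : Fin n, i < j → 0 < a j - b i →
      ∃ k : Fin n, i < k ∧ k < j ∧ 0 < b k - a k := by
    intro i j hij hpos
    by_contra hcon
    push_neg at hcon
    have hle : a j - b i ≤ 0 := by
      rw [hgapsum i j hij]
      apply Finset.sum_nonpos
      intro k hk
      rw [Finset.mem_Ico] at hk
      have hkn : k < n := lt_trans hk.2 j.isLt
      have hterm : f (k+1) - f k = b ⟨k, hkn⟩ - a ⟨k, hkn⟩ := by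
        rw [← hfb ⟨k, hkn⟩, ← hfa ⟨k, hkn⟩]
      rw [hterm]
      exact hcon ⟨k, hkn⟩ (by simp [Fin.lt_def]; omega) (by simp [Fin.lt_def]; exact hk.2)
    linarith
  -- named finsets
  set Good : Finset (Fin n) := Finset.univ.filter (fun i => good i = true) with hGood_def
  set Bad : Finset (Fin n) := Finset.univ.filter (fun i => good i = false) with hBad_def
  set Pos : Finset (Fin n) := Good.filter (fun i => 0 < b i - a i) with hPos_def
  have hPosGood : ∀ i ∈ Pos, good i = true := by
    intro i hi
    rw [hPos_def, Finset.mem_filter, hGood_def, Finset.mem_filter] at hi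
    exact hi.1.2
  have hPospos : ∀ i ∈ Pos, 0 < b i - a i := by
    intro i hi
    rw [hPos_def, Finset.mem_filter] at hi
    exact hi.2
  -- positive gap between any two positive good intervals
  have hgappos : ∀ p q : Fin n, p ∈ Pos → q ∈ Pos → p < q → 0 < a q - b p := by
    intro p q hp hq hpq
    have h1 := hgap p q (hPosGood p hp) (hPosGood q hq) hpq
    have h2 : 0 < min (b p - a p) (b q - a q) := lt_min (hPospos p hp) (hPospos q hq)
    have h3 : 0 < (min (b p - a p) (b q - a q)) ^ ((1:ℝ) + ρ) := Real.rpow_pos_of_pos h2 _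
    linarith
  -- claim C : between two positive good intervals there is a bad interval
  have claimC : ∀ i j : Fin n, i ∈ Pos → j ∈ Pos → i < j →
      ∃ k : Fin n, good k = false ∧ i < k ∧ k < j := by
    intro i j hi hj hij
    have hTne : (Finset.filter (fun k : Fin n => i < k ∧ k < j ∧ 0 < b k - a k)
        Finset.univ).Nonempty := by
      obtain ⟨k, h1, h2, h3⟩ := hexpos i j hij (hgappos i j hi hj hij)
      exact ⟨k, Finset.mem_filter.mpr ⟨Finset.mem_univ _, h1, h2, h3⟩⟩
    obtain ⟨k0, hk0T, hk0min⟩ : ∃ k0, (k0 ∈ Finset.filter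
        (fun k : Fin n => i < k ∧ k < j ∧ 0 < b k - a k) Finset.univ) ∧
        ∀ k' ∈ Finset.filter (fun k : Fin n => i < k ∧ k < j ∧ 0 < b k - a k)
          Finset.univ, k0 ≤ k' :=
      ⟨_, Finset.min'_mem _ hTne, fun k' hk' => Finset.min'_le _ k' hk'⟩
    rw [Finset.mem_filter] at hk0T
    obtain ⟨-, hik0, hk0j, hk0pos⟩ := hk0T
    cases hgk : good k0 with
    | false => exact ⟨k0, hgk, hik0, hk0j⟩
    | true =>
      exfalso
      have hk0Pos : k0 ∈ Pos := by
        rw [hPos_def, Finset.mem_filter, hGood_def, Finset.mem_filter]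
        exact ⟨⟨Finset.mem_univ _, hgk⟩, hk0pos⟩
      obtain ⟨k1, h1, h2, h3⟩ := hexpos i k0 hik0 (hgappos i k0 hi hk0Pos hik0)
      have hk1T : k1 ∈ Finset.filter (fun k : Fin n => i < k ∧ k < j ∧ 0 < b k - a k)
          Finset.univ :=
        Finset.mem_filter.mpr ⟨Finset.mem_univ _, h1, lt_trans h2 hk0j, h3⟩
      exact absurd h2 (not_lt.mpr (hk0min k1 hk1T))
  -- Lemma A : chain estimate
  have lemA : ∀ (S : Finset (Fin n)) (u : ℝ), 0 ≤ u → (∀ i ∈ S, good i = true) →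
      (∀ i ∈ S, u ≤ b i - a i) → ((S.card : ℝ) - 1) * u ^ ((1:ℝ) + ρ) ≤ lam := by
    intro S u hu hSG hSu
    have hupow : (0:ℝ) ≤ u ^ ((1:ℝ) + ρ) := Real.rpow_nonneg hu _
    rcases Nat.eq_zero_or_pos S.card with hc | hc
    · rw [hc]; push_cast; nlinarith
    · set c := S.card with hc_def
      set e := S.orderIsoOfFin rfl with he_def
      have key : ∀ k : ℕ, ∀ hk : k < c, (k:ℝ) * u ^ ((1:ℝ) + ρ) ≤ a (e ⟨k, hk⟩ : { x // x ∈ S }) := by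
        intro k
        induction k with
        | zero => intro hk; simpa using ha0 _
        | succ k ih =>
          intro hk
          have hk' : k < c := by omega
          have hltF : (⟨k, hk'⟩ : Fin c) < ⟨k+1, hk⟩ := by simp [Fin.lt_def]
          have hlt : ((e ⟨k, hk'⟩ : { x // x ∈ S }) : Fin n) < ((e ⟨k+1, hk⟩ : { x // x ∈ S }) : Fin n) := by
            exact_mod_cast e.strictMono hltF
          have hm1 : ((e ⟨k, hk'⟩ : { x // x ∈ S }) : Fin n) ∈ S := (e ⟨k, hk'⟩).2
          have hm2 : ((e ⟨k+1, hk⟩ : { x // x ∈ S }) : Fin n) ∈ S := (e ⟨k+1, hk⟩).2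
          have hgapk := hgap _ _ (hSG _ hm1) (hSG _ hm2) hlt
          have humin : u ^ ((1:ℝ) + ρ) ≤
              (min (b (e ⟨k, hk'⟩ : { x // x ∈ S }) - a (e ⟨k, hk'⟩ : { x // x ∈ S }))
                (b (e ⟨k+1, hk⟩ : { x // x ∈ S }) - a (e ⟨k+1, hk⟩ : { x // x ∈ S }))) ^ ((1:ℝ) + ρ) :=
            Real.rpow_le_rpow hu (le_min (hSu _ hm1) (hSu _ hm2)) (by linarith)
          have hab' := hab (e ⟨k, hk'⟩ : { x // x ∈ S })
          have hih := ih hk'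
          push_cast
          linarith
      have hfin : c - 1 < c := by omega
      have hlast' := key (c-1) hfin
      have hcast : ((c - 1 : ℕ) : ℝ) = (c:ℝ) - 1 := by
        rw [Nat.cast_sub hc]; norm_num
      rw [hcast] at hlast'
      have h1 := hab (e ⟨c-1, hfin⟩ : { x // x ∈ S })
      have h2 := hblam (e ⟨c-1, hfin⟩ : { x // x ∈ S })
      linarith
  -- cardinality bound : Pos.card ≤ Bad.card + 1
  have hNcard : Pos.card ≤ Bad.card + 1 := by
    rcases Pos.eq_empty_or_nonempty with hP | hP
    · simp [hP]
    · set t := Pos.max' hP with ht_def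
      have htPos : t ∈ Pos := Pos.max'_mem hP
      set F : Fin n → Fin n := fun i =>
        if h : (Bad.filter (fun k => i < k)).Nonempty
          then (Bad.filter (fun k => i < k)).min' h else i with hF_def
      have hF1 : ∀ i ∈ Pos.erase t, F i ∈ Bad ∧ i < F i ∧ ∀ k ∈ Bad, i < k → F i ≤ k := by
        intro i hi
        have hi' : i ∈ Pos := Finset.mem_of_mem_erase hi
        have hit : i < t :=
          lt_of_le_of_ne (Pos.le_max' i hi') (Finset.ne_of_mem_erase hi)
        obtain ⟨k, hkb, hik, hkt⟩ := claimC i t hi' htPos hit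
        have hkBad : k ∈ Bad := by
          rw [hBad_def, Finset.mem_filter]; exact ⟨Finset.mem_univ _, hkb⟩
        have hne : (Bad.filter (fun k => i < k)).Nonempty :=
          ⟨k, Finset.mem_filter.mpr ⟨hkBad, hik⟩⟩
        have hFi : F i = (Bad.filter (fun k => i < k)).min' hne := by
          rw [hF_def]; simp only []; rw [dif_pos hne]
        have hmem := (Bad.filter (fun k => i < k)).min'_mem hne
        rw [Finset.mem_filter] at hmem
        refine ⟨by rw [hFi]; exact hmem.1, by rw [hFi]; exact hmem.2, ?_⟩
        intro k' hk' hik'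
        rw [hFi]
        exact Finset.min'_le _ k' (Finset.mem_filter.mpr ⟨hk', hik'⟩)
      have hmaps : ∀ i ∈ Pos.erase t, F i ∈ Bad := fun i hi => (hF1 i hi).1
      have hkey : ∀ p q : Fin n, p ∈ Pos.erase t → q ∈ Pos.erase t → p < q → F p < F q := by
        intro p q hp hq hpq
        obtain ⟨k, hkb, hpk, hkq⟩ := claimC p q (Finset.mem_of_mem_erase hp)
          (Finset.mem_of_mem_erase hq) hpq
        have hkBad : k ∈ Bad := by
          rw [hBad_def, Finset.mem_filter]; exact ⟨Finset.mem_univ _, hkb⟩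
        have h1 : F p ≤ k := (hF1 p hp).2.2 k hkBad hpk
        have h2 : q < F q := (hF1 q hq).2.1
        exact lt_of_le_of_lt h1 (lt_trans hkq h2)
      have hinj : Set.InjOn F (Pos.erase t) := by
        intro p hp q hq heq
        rcases lt_trichotomy p q with h | h | h
        · exact absurd heq (ne_of_lt (hkey p q hp hq h))
        · exact h
        · exact absurd heq.symm (ne_of_lt (hkey q p hq hp h))
      have hcard := Finset.card_le_card_of_injOn F hmaps hinj
      rw [Finset.card_erase_of_mem htPos] at hcard
      omega
  -- sum bound by induction
  have haveS : ∀ (c : ℕ) (S : Finset (Fin n)), S.card = c → (∀ i ∈ S, good i = true) →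
      ∑ i ∈ S, (b i - a i) ≤ 3/4 * lam + ∑ r ∈ Finset.Ico 1 c, (lam / (r:ℝ)) ^ α := by
    intro c
    induction c with
    | zero =>
      intro S hS _
      rw [Finset.card_eq_zero.mp hS]
      simp
      linarith
    | succ c ih =>
      intro S hS hSG
      have hne : S.Nonempty := Finset.card_pos.mp (by omega)
      obtain ⟨i0, hi0S, hi0min⟩ := S.exists_min_image (fun i => b i - a i) hne
      have hu0 : 0 ≤ b i0 - a i0 := by have := hab i0; linarith
      have hA := lemA S (b i0 - a i0) hu0 hSG (fun i hi => hi0min i hi)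
      rw [hS] at hA
      push_cast at hA
      have hA' : (c:ℝ) * (b i0 - a i0) ^ ((1:ℝ) + ρ) ≤ lam := by linarith
      have hsplit : ∑ i ∈ S, (b i - a i)
          = (b i0 - a i0) + ∑ i ∈ S.erase i0, (b i - a i) :=
        (Finset.add_sum_erase S _ hi0S).symm
      rcases Nat.eq_zero_or_pos c with hc0 | hc1
      · subst hc0
        obtain ⟨x, hx⟩ := Finset.card_eq_one.mp hS
        rw [hx, Finset.sum_singleton]
        have hxg : good x = true := hSG x (by rw [hx]; exact Finset.mem_singleton_self x)
        have := hgood34 x hxg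
        simp
        linarith
      · have herase : (S.erase i0).card = c := by
          rw [Finset.card_erase_of_mem hi0S, hS]
          omega
        have hIH := ih (S.erase i0) herase
          (fun i hi => hSG i (Finset.mem_of_mem_erase hi))
        have hcR : (0:ℝ) < (c:ℝ) := by exact_mod_cast hc1
        have hu_le : b i0 - a i0 ≤ (lam / (c:ℝ)) ^ α := by
          have h1 : (b i0 - a i0) ^ ((1:ℝ) + ρ) ≤ lam / (c:ℝ) := by
            rw [le_div_iff₀ hcR]; nlinarith
          calc b i0 - a i0 = ((b i0 - a i0) ^ ((1:ℝ) + ρ)) ^ α := by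
                rw [hα_def, Real.rpow_rpow_inv hu0 (by linarith)]
            _ ≤ (lam / (c:ℝ)) ^ α :=
                Real.rpow_le_rpow (Real.rpow_nonneg hu0 _) h1 hα0.le
        have hIco : ∑ r ∈ Finset.Ico 1 (c+1), (lam / (r:ℝ)) ^ α
            = ∑ r ∈ Finset.Ico 1 c, (lam / (r:ℝ)) ^ α + (lam / (c:ℝ)) ^ α :=
          Finset.sum_Ico_succ_top (by omega) _
        rw [hsplit, hIco]
        linarith
  -- assemble
  set B : ℝ := ∑ i ∈ Bad, (b i - a i) with hB_def
  have hB0 : 0 ≤ B := by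
    rw [hB_def]
    apply Finset.sum_nonneg
    intro i hi
    have := hab i; linarith
  have htot : (∑ i ∈ Good, (b i - a i)) + B = lam := by
    rw [hB_def, hGood_def, hBad_def]
    have : (Finset.univ.filter (fun i => good i = false) : Finset (Fin n))
        = Finset.univ.filter (fun i => ¬ (good i = true)) := by
      apply Finset.filter_congr
      intro i _
      simp
    rw [this, Finset.sum_filter_add_sum_filter_not, hsum_total]
  have hGP : ∑ i ∈ Good, (b i - a i) = ∑ i ∈ Pos, (b i - a i) := by
    rw [hPos_def]
    exact (Finset.sum_filter_of_ne (fun x _ hfx =>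
      lt_of_le_of_ne (by have := hab x; linarith) (Ne.symm hfx))).symm
  set N := Pos.card with hN_def
  have hS := haveS N Pos rfl hPosGood
  have hIcoBound : ∑ r ∈ Finset.Ico 1 N, (lam / (r:ℝ)) ^ α
      ≤ lam ^ α * ((N - 1 : ℕ):ℝ) ^ β / β := by
    rcases Nat.eq_zero_or_pos N with h0' | h1'
    · rw [h0']
      simp [Real.zero_rpow hβ0.ne']
    · obtain ⟨m, hm⟩ : ∃ m, N = m + 1 := ⟨N - 1, by omega⟩
      rw [hm]
      have hterm : ∀ r ∈ Finset.Ico 1 (m+1), (lam / (r:ℝ)) ^ α = lam ^ α * (((r:ℝ) ^ α)⁻¹) := by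
        intro r hr
        rw [Finset.mem_Ico] at hr
        have hr0 : (0:ℝ) ≤ (r:ℝ) := Nat.cast_nonneg r
        rw [Real.div_rpow hlam0.le hr0, div_eq_mul_inv]
      rw [Finset.sum_congr rfl hterm, ← Finset.mul_sum]
      have hlamα : (0:ℝ) ≤ lam ^ α := Real.rpow_nonneg hlam0.le _
      have : (m + 1 - 1 : ℕ) = m := by omega
      rw [this]
      calc lam ^ α * ∑ r ∈ Finset.Ico 1 (m+1), (((r:ℝ) ^ α)⁻¹)
          ≤ lam ^ α * ((m:ℝ) ^ β / β) := by
            exact mul_le_mul_of_nonneg_left (hH m) hlamα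
        _ = lam ^ α * ((m:ℕ):ℝ) ^ β / β := by ring
  have hBadcard : ((Bad.card : ℕ):ℝ) ≤ B := by
    rw [hB_def]
    calc ((Bad.card : ℕ):ℝ) = ∑ _i ∈ Bad, (1:ℝ) := by
          rw [Finset.sum_const, nsmul_eq_mul, mul_one]
      _ ≤ ∑ i ∈ Bad, (b i - a i) := by
          apply Finset.sum_le_sum
          intro i hi
          rw [hBad_def, Finset.mem_filter] at hi
          exact hbad1 i hi.2
  have hNB : ((N - 1 : ℕ):ℝ) ≤ B := by
    have h1 : N - 1 ≤ Bad.card := by omega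
    calc ((N - 1 : ℕ):ℝ) ≤ ((Bad.card : ℕ):ℝ) := by exact_mod_cast h1
      _ ≤ B := hBadcard
  have hNB' : ((N - 1 : ℕ):ℝ) ^ β ≤ B ^ β :=
    Real.rpow_le_rpow (Nat.cast_nonneg _) hNB hβ0.le
  have hmain : lam ≤ 3/4 * lam + lam ^ α * B ^ β / β + B := by
    have hlamα : (0:ℝ) ≤ lam ^ α := Real.rpow_nonneg hlam0.le _
    have h1 : lam ^ α * ((N - 1 : ℕ):ℝ) ^ β / β ≤ lam ^ α * B ^ β / β := by
      gcongr
    have h2 : ∑ i ∈ Pos, (b i - a i) ≤ 3/4 * lam + lam ^ α * B ^ β / β :=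
      le_trans hS (by linarith [hIcoBound, h1])
    have h2' : ∑ i ∈ Good, (b i - a i) ≤ 3/4 * lam + lam ^ α * B ^ β / β := by
      rw [hGP]; exact h2
    linarith [htot, h2']
  -- conclude
  by_contra hcon
  push_neg at hcon
  have hBθ : B ^ β ≤ θ ^ β * lam ^ β := by
    calc B ^ β ≤ (θ * lam) ^ β := Real.rpow_le_rpow hB0 hcon.le hβ0.le
      _ = θ ^ β * lam ^ β := Real.mul_rpow hθ0.le hlam0.le
  have hlamαβ : lam ^ α * lam ^ β = lam := by
    rw [← Real.rpow_add hlam0, hαβ, Real.rpow_one]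
  have hlamα : (0:ℝ) ≤ lam ^ α := Real.rpow_nonneg hlam0.le _
  have h3 : lam ^ α * B ^ β / β ≤ lam / 16 := by
    have : lam ^ α * B ^ β ≤ θ ^ β * lam := by
      calc lam ^ α * B ^ β ≤ lam ^ α * (θ ^ β * lam ^ β) :=
            mul_le_mul_of_nonneg_left hBθ hlamα
        _ = θ ^ β * (lam ^ α * lam ^ β) := by ring
        _ = θ ^ β * lam := by rw [hlamαβ]
    calc lam ^ α * B ^ β / β ≤ θ ^ β * lam / β := by
          gcongr
      _ ≤ lam / 16 := by
          rw [div_le_div_iff₀ hβ0 (by norm_num : (0:ℝ) < 16)]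
          calc θ ^ β * lam * 16 ≤ (β/16) * lam * 16 := by nlinarith
            _ = lam * β := by ring
  have h4 : B < lam / 16 := lt_of_lt_of_le hcon (by nlinarith)
  linarith
end

section
/- (Convergence of the branching norm series) Let ν > 1/2 and s ≥ 0. Then there is a constant C > 1 such that for all integers l ≥ 0, C⁻¹ ≤ Σ_{k≥0} (1+l)^{2ν+2s−1}·(1+l+2k)^{−2ν−2s}·(1+l+2k)·(1+2l+2k)^{−1/2}·(1+2k)^{−1/2} ≤ C, i.e. the series is bounded above and below by positive constants independent of l. -/
open Finset Real

/-- Sum of inverse square roots bound. -/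
private lemma sum_inv_sqrt_le (n : ℕ) :
    ∑ k ∈ Finset.range n, ((1:ℝ) + 2 * k) ^ (-(1/2) : ℝ) ≤ Real.sqrt (2 * n) := by
  induction n with
  | zero => simp
  | succ n ih =>
    rw [Finset.sum_range_succ]
    have hb : (0:ℝ) ≤ 2 * ((n:ℝ)+1) := by positivity
    have ha : (0:ℝ) ≤ 2 * (n:ℝ) := by positivity
    have hc : (0:ℝ) < 1 + 2 * (n:ℝ) := by positivity
    have key : ((1:ℝ) + 2 * n) ^ (-(1/2) : ℝ) ≤ Real.sqrt (2 * ((n:ℝ)+1)) - Real.sqrt (2 * n) := by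
      have h1 : ((1:ℝ) + 2 * n) ^ (-(1/2) : ℝ) = (Real.sqrt (1 + 2 * n))⁻¹ := by
        rw [Real.rpow_neg hc.le, Real.sqrt_eq_rpow]
      rw [h1]
      have hs : (0:ℝ) < Real.sqrt (1 + 2*(n:ℝ)) := Real.sqrt_pos.mpr hc
      have hq : Real.sqrt (2*((n:ℝ)+1)) + Real.sqrt (2*(n:ℝ)) ≤ 2 * Real.sqrt (1 + 2*(n:ℝ)) := by
        nlinarith [Real.sq_sqrt hb, Real.sq_sqrt ha, Real.sq_sqrt hc.le,
          Real.sqrt_nonneg (2*((n:ℝ)+1)), Real.sqrt_nonneg (2*(n:ℝ)),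
          Real.sqrt_nonneg ((1:ℝ)+2*(n:ℝ)),
          sq_nonneg (Real.sqrt (2*((n:ℝ)+1)) - Real.sqrt (2*(n:ℝ))),
          sq_nonneg (Real.sqrt (2*((n:ℝ)+1)) + Real.sqrt (2*(n:ℝ)) - 2 * Real.sqrt (1+2*(n:ℝ)))]
      have hmul : (Real.sqrt (2*((n:ℝ)+1)) - Real.sqrt (2*(n:ℝ))) *
          (Real.sqrt (2*((n:ℝ)+1)) + Real.sqrt (2*(n:ℝ))) = 2 := by
        nlinarith [Real.sq_sqrt hb, Real.sq_sqrt ha]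
      have hsum : (0:ℝ) < Real.sqrt (2*((n:ℝ)+1)) + Real.sqrt (2*(n:ℝ)) := by
        have h0 : (0:ℝ) < Real.sqrt (2*((n:ℝ)+1)) := Real.sqrt_pos.mpr (by positivity)
        nlinarith [Real.sqrt_nonneg (2*(n:ℝ))]
      rw [inv_le_iff_one_le_mul₀ hs]
      nlinarith
    have hcast : Real.sqrt (2 * ((n:ℕ)+1:ℕ)) = Real.sqrt (2 * ((n:ℝ)+1)) := by push_cast; ring_nf
    rw [hcast]
    linarith

/-- Bernoulli-type telescoping bound. -/
private lemma telescope_step {α : ℝ} (hα : 0 < α) (k : ℕ) (hk : 1 ≤ k) :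
    ((1:ℝ) + 2 * k) ^ (-(α+1)) ≤ (1/(2*α)) * ((2*(k:ℝ)-1) ^ (-α) - (2*(k:ℝ)+1) ^ (-α)) := by
  have hk1 : (1:ℝ) ≤ (k:ℝ) := by exact_mod_cast hk
  have ha : (0:ℝ) < 2*(k:ℝ) - 1 := by linarith
  have hb : (0:ℝ) < 2*(k:ℝ) + 1 := by linarith
  set a : ℝ := 2*(k:ℝ) - 1 with hadef
  set b : ℝ := 2*(k:ℝ) + 1 with hbdef
  have hab : a < b := by rw [hadef, hbdef]; linarith
  have hr : a / b < 1 := (div_lt_one hb).mpr hab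
  have hrpos : 0 < a / b := div_pos ha hb
  have hbern : 1 + α * (1 - a/b) ≤ (a/b) ^ (-α) := by
    have hlog : Real.log (a/b) ≤ a/b - 1 := Real.log_le_sub_one_of_pos hrpos
    have hexp : (-α) * Real.log (a/b) + 1 ≤ Real.exp ((-α) * Real.log (a/b)) :=
      Real.add_one_le_exp _
    rw [Real.rpow_def_of_pos hrpos]
    have hexp2 : Real.log (a/b) * (-α) + 1 ≤ Real.exp (Real.log (a/b) * (-α)) :=
      Real.add_one_le_exp _
    have h2 : α * Real.log (a/b) ≤ α * (a/b - 1) := mul_le_mul_of_nonneg_left hlog hα.le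
    nlinarith
  have hbpow : (0:ℝ) < b ^ (-α) := Real.rpow_pos_of_pos hb _
  have hsplit : (a/b) ^ (-α) * b ^ (-α) = a ^ (-α) := by
    rw [Real.div_rpow ha.le hb.le, div_mul_cancel₀]
    exact (Real.rpow_pos_of_pos hb _).ne'
  have h1 : (1 + α * (1 - a/b)) * b ^ (-α) ≤ a ^ (-α) := by
    rw [← hsplit]
    exact mul_le_mul_of_nonneg_right hbern hbpow.le
  have h2 : 1 - a/b = 2/b := by
    rw [hadef, hbdef]; field_simp; ring
  rw [h2] at h1
  have hb1 : ((1:ℝ) + 2*k) = b := by rw [hbdef]; ring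
  have hpow : b ^ (-(α+1)) = b ^ (-α) * b⁻¹ := by
    rw [show -(α+1) = -α + (-1) by ring, Real.rpow_add hb, Real.rpow_neg_one]
  rw [hb1, hpow]
  have key : 2 * α * (b ^ (-α) * b⁻¹) ≤ a ^ (-α) - b ^ (-α) := by
    have hexpand : (1 + α * (2/b)) * b ^ (-α) = b ^ (-α) + 2 * α * (b ^ (-α) * b⁻¹) := by
      field_simp
    rw [hexpand] at h1
    linarith
  have h2α : (0:ℝ) < 2*α := by linarith
  rw [div_mul_eq_mul_div, le_div_iff₀ h2α]
  linarith

/-- Telescoping tail sum. -/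
private lemma tail_sum_le {α : ℝ} (hα : 0 < α) (m N : ℕ) (hm : 1 ≤ m) :
    ∑ j ∈ Finset.range N, ((1:ℝ) + 2 * ((m + j : ℕ):ℝ)) ^ (-(α+1))
      ≤ (1/(2*α)) * (2*(m:ℝ)-1) ^ (-α) := by
  have hm1 : (1:ℝ) ≤ (m:ℝ) := by exact_mod_cast hm
  have key : ∀ N : ℕ, ∑ j ∈ Finset.range N, ((1:ℝ) + 2 * ((m + j : ℕ):ℝ)) ^ (-(α+1))
      ≤ (1/(2*α)) * ((2*(m:ℝ)-1) ^ (-α) - (2*((m:ℝ)+N)-1) ^ (-α)) := by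
    intro N
    induction N with
    | zero => simp
    | succ N ih =>
      rw [Finset.sum_range_succ]
      have hstep := telescope_step hα (m + N) (by omega)
      have heq : 2*((m:ℝ)+(N+1)) - 1 = 2*((m:ℝ)+N) + 1 := by ring
      push_cast at hstep ih ⊢
      rw [heq]
      linarith
  refine (key N).trans ?_
  have hpos : (0:ℝ) ≤ (2*((m:ℝ)+N)-1) ^ (-α) := by
    apply Real.rpow_nonneg
    have : (0:ℝ) ≤ (N:ℝ) := by positivity
    linarith
  have h2α : (0:ℝ) < 1/(2*α) := by positivity
  nlinarith

/-- Convergence of the branching norm series: let `ν > 1/2` and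
`s ≥ 0`.  The series
`Σ_{k≥0} (1+l)^{2ν+2s-1} (1+l+2k)^{-2ν-2s} (1+l+2k) (1+2l+2k)^{-1/2} (1+2k)^{-1/2}`
is convergent and bounded above and below by positive constants independent of
`l ≥ 0`. -/
theorem stmt16 (ν s : ℝ) (hν : 1 / 2 < ν) (hs : 0 ≤ s) :
    ∃ C > (1:ℝ), ∀ l : ℕ,
      Summable (fun k : ℕ =>
        ((1 : ℝ) + l) ^ (2 * ν + 2 * s - 1) * ((1 : ℝ) + l + 2 * k) ^ (-(2 * ν) - 2 * s) *
          ((1 : ℝ) + l + 2 * k) * ((1 : ℝ) + 2 * l + 2 * k) ^ (-(1 / 2 : ℝ)) *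
          ((1 : ℝ) + 2 * k) ^ (-(1 / 2 : ℝ))) ∧
      C⁻¹ ≤ ∑' k : ℕ,
        ((1 : ℝ) + l) ^ (2 * ν + 2 * s - 1) * ((1 : ℝ) + l + 2 * k) ^ (-(2 * ν) - 2 * s) *
          ((1 : ℝ) + l + 2 * k) * ((1 : ℝ) + 2 * l + 2 * k) ^ (-(1 / 2 : ℝ)) *
          ((1 : ℝ) + 2 * k) ^ (-(1 / 2 : ℝ)) ∧
      (∑' k : ℕ,
        ((1 : ℝ) + l) ^ (2 * ν + 2 * s - 1) * ((1 : ℝ) + l + 2 * k) ^ (-(2 * ν) - 2 * s) *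
          ((1 : ℝ) + l + 2 * k) * ((1 : ℝ) + 2 * l + 2 * k) ^ (-(1 / 2 : ℝ)) *
          ((1 : ℝ) + 2 * k) ^ (-(1 / 2 : ℝ))) ≤ C := by
  set α : ℝ := 2 * ν + 2 * s - 1 with hαdef
  have hα : 0 < α := by rw [hαdef]; linarith
  have h3α : (0:ℝ) < 3 ^ α := Real.rpow_pos_of_pos (by norm_num) _
  have hsqrt2 : (0:ℝ) ≤ Real.sqrt 2 := Real.sqrt_nonneg _
  have h2αinv : (0:ℝ) < 1/(2*α) := by positivity
  set C : ℝ := 4 * 3 ^ α + Real.sqrt 2 + 1 + 1/(2*α) + 1 with hCdef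
  have hC1 : 1 < C := by rw [hCdef]; nlinarith
  have hC0 : 0 < C := by linarith
  refine ⟨C, hC1, fun l => ?_⟩
  set f : ℕ → ℝ := fun k =>
    ((1 : ℝ) + l) ^ (2 * ν + 2 * s - 1) * ((1 : ℝ) + l + 2 * k) ^ (-(2 * ν) - 2 * s) *
      ((1 : ℝ) + l + 2 * k) * ((1 : ℝ) + 2 * l + 2 * k) ^ (-(1 / 2 : ℝ)) *
      ((1 : ℝ) + 2 * k) ^ (-(1 / 2 : ℝ)) with hfdef
  have hl0 : (0:ℝ) ≤ (l:ℝ) := Nat.cast_nonneg l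
  have hA : (0:ℝ) < 1 + l := by positivity
  have hBpos : ∀ k : ℕ, (0:ℝ) < 1 + l + 2 * k := fun k => by positivity
  have hDpos : ∀ k : ℕ, (0:ℝ) < 1 + 2 * l + 2 * k := fun k => by positivity
  have hEpos : ∀ k : ℕ, (0:ℝ) < 1 + 2 * k := fun k => by positivity
  have hfg : ∀ k : ℕ, f k = ((1:ℝ) + l) ^ α * ((1:ℝ) + l + 2 * k) ^ (-α) *
      ((1:ℝ) + 2 * l + 2 * k) ^ (-(1/2) : ℝ) * ((1:ℝ) + 2 * k) ^ (-(1/2) : ℝ) := by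
    intro k
    have hrw : ((1:ℝ) + l + 2 * k) ^ (-(2 * ν) - 2 * s) * ((1:ℝ) + l + 2 * k)
        = ((1:ℝ) + l + 2 * k) ^ (-α) := by
      rw [show (-α : ℝ) = (-(2*ν) - 2*s) + 1 by rw [hαdef]; ring,
        Real.rpow_add (hBpos k), Real.rpow_one]
    rw [hfdef]
    simp only []
    rw [mul_assoc (((1:ℝ)+l) ^ (2*ν+2*s-1)), hrw, ← hαdef]
  have hf0 : ∀ k, 0 ≤ f k := by
    intro k
    rw [hfg k]
    have h1 := hBpos k; have h2 := hDpos k; have h3 := hEpos k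
    positivity
  have hAB : ∀ k : ℕ, ((1:ℝ) + l) ^ α * ((1:ℝ) + l + 2 * k) ^ (-α) ≤ 1 := by
    intro k
    have h1 : ((1:ℝ) + l + 2 * k) ^ (-α) ≤ ((1:ℝ) + l) ^ (-α) :=
      Real.rpow_le_rpow_of_nonpos hA
        (by have : (0:ℝ) ≤ (k:ℝ) := Nat.cast_nonneg k; linarith) (by linarith)
    calc ((1:ℝ) + l) ^ α * ((1:ℝ) + l + 2 * k) ^ (-α)
        ≤ ((1:ℝ) + l) ^ α * ((1:ℝ) + l) ^ (-α) :=
          mul_le_mul_of_nonneg_left h1 (Real.rpow_nonneg hA.le _)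
      _ = 1 := by rw [← Real.rpow_add hA]; simp
  have hub1 : ∀ k : ℕ, f k ≤ ((1:ℝ) + l) ^ (-(1/2) : ℝ) * ((1:ℝ) + 2 * k) ^ (-(1/2) : ℝ) := by
    intro k
    rw [hfg k]
    have hk0 : (0:ℝ) ≤ (k:ℝ) := Nat.cast_nonneg k
    have hD : ((1:ℝ) + 2 * l + 2 * k) ^ (-(1/2) : ℝ) ≤ ((1:ℝ) + l) ^ (-(1/2) : ℝ) :=
      Real.rpow_le_rpow_of_nonpos hA (by linarith) (by norm_num)
    have hE : (0:ℝ) ≤ ((1:ℝ) + 2 * k) ^ (-(1/2) : ℝ) := Real.rpow_nonneg (hEpos k).le _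
    calc ((1:ℝ) + l) ^ α * ((1:ℝ) + l + 2 * k) ^ (-α) *
        ((1:ℝ) + 2 * l + 2 * k) ^ (-(1/2) : ℝ) * ((1:ℝ) + 2 * k) ^ (-(1/2) : ℝ)
        ≤ 1 * (((1:ℝ) + 2 * l + 2 * k) ^ (-(1/2) : ℝ)) * ((1:ℝ) + 2 * k) ^ (-(1/2) : ℝ) := by
          apply mul_le_mul_of_nonneg_right _ hE
          exact mul_le_mul_of_nonneg_right (hAB k) (Real.rpow_nonneg (hDpos k).le _)
      _ ≤ 1 * (((1:ℝ) + l) ^ (-(1/2) : ℝ)) * ((1:ℝ) + 2 * k) ^ (-(1/2) : ℝ) := by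
          apply mul_le_mul_of_nonneg_right _ hE
          rw [one_mul, one_mul]; exact hD
      _ = ((1:ℝ) + l) ^ (-(1/2) : ℝ) * ((1:ℝ) + 2 * k) ^ (-(1/2) : ℝ) := by ring
  have hub2 : ∀ k : ℕ, f k ≤ ((1:ℝ) + l) ^ α * ((1:ℝ) + 2 * k) ^ (-(α+1)) := by
    intro k
    rw [hfg k]
    have hk0 : (0:ℝ) ≤ (k:ℝ) := Nat.cast_nonneg k
    have hApow : (0:ℝ) ≤ ((1:ℝ) + l) ^ α := Real.rpow_nonneg hA.le _
    have hB : ((1:ℝ) + l + 2 * k) ^ (-α) ≤ ((1:ℝ) + 2 * k) ^ (-α) :=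
      Real.rpow_le_rpow_of_nonpos (hEpos k) (by linarith) (by linarith)
    have hD : ((1:ℝ) + 2 * l + 2 * k) ^ (-(1/2) : ℝ) ≤ ((1:ℝ) + 2 * k) ^ (-(1/2) : ℝ) :=
      Real.rpow_le_rpow_of_nonpos (hEpos k) (by linarith) (by norm_num)
    have hE : (0:ℝ) ≤ ((1:ℝ) + 2 * k) ^ (-(1/2) : ℝ) := Real.rpow_nonneg (hEpos k).le _
    have hsplit : ((1:ℝ) + 2 * k) ^ (-(α+1)) =
        ((1:ℝ) + 2 * k) ^ (-α) * ((1:ℝ) + 2 * k) ^ (-(1/2) : ℝ) * ((1:ℝ) + 2 * k) ^ (-(1/2) : ℝ) := by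
      rw [← Real.rpow_add (hEpos k), ← Real.rpow_add (hEpos k)]
      congr 1; ring
    calc ((1:ℝ) + l) ^ α * ((1:ℝ) + l + 2 * k) ^ (-α) *
        ((1:ℝ) + 2 * l + 2 * k) ^ (-(1/2) : ℝ) * ((1:ℝ) + 2 * k) ^ (-(1/2) : ℝ)
        ≤ ((1:ℝ) + l) ^ α * ((1:ℝ) + 2 * k) ^ (-α) *
          ((1:ℝ) + 2 * l + 2 * k) ^ (-(1/2) : ℝ) * ((1:ℝ) + 2 * k) ^ (-(1/2) : ℝ) := by
          apply mul_le_mul_of_nonneg_right _ hE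
          exact mul_le_mul_of_nonneg_right (mul_le_mul_of_nonneg_left hB hApow)
            (Real.rpow_nonneg (hDpos k).le _)
      _ ≤ ((1:ℝ) + l) ^ α * ((1:ℝ) + 2 * k) ^ (-α) *
          ((1:ℝ) + 2 * k) ^ (-(1/2) : ℝ) * ((1:ℝ) + 2 * k) ^ (-(1/2) : ℝ) := by
          apply mul_le_mul_of_nonneg_right _ hE
          exact mul_le_mul_of_nonneg_left hD
            (mul_nonneg hApow (Real.rpow_nonneg (hEpos k).le _))
      _ = ((1:ℝ) + l) ^ α * ((1:ℝ) + 2 * k) ^ (-(α+1)) := by rw [hsplit]; ring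
  set U : ℝ := Real.sqrt 2 + 1 + 1/(2*α) with hUdef
  have hpartial : ∀ N : ℕ, ∑ k ∈ Finset.range N, f k ≤ U := by
    intro N
    have hmono : ∑ k ∈ Finset.range N, f k ≤ ∑ k ∈ Finset.range (l + N), f k :=
      Finset.sum_le_sum_of_subset_of_nonneg (Finset.range_subset_range.mpr (by omega))
        (fun i _ _ => hf0 i)
    refine hmono.trans ?_
    rw [Finset.sum_range_add]
    have hpart1 : ∑ k ∈ Finset.range l, f k ≤ Real.sqrt 2 := by
      calc ∑ k ∈ Finset.range l, f k
          ≤ ∑ k ∈ Finset.range l, ((1:ℝ) + l) ^ (-(1/2) : ℝ) * ((1:ℝ) + 2 * k) ^ (-(1/2) : ℝ) :=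
            Finset.sum_le_sum fun k _ => hub1 k
        _ = ((1:ℝ) + l) ^ (-(1/2) : ℝ) * ∑ k ∈ Finset.range l, ((1:ℝ) + 2 * k) ^ (-(1/2) : ℝ) := by
            rw [Finset.mul_sum]
        _ ≤ ((1:ℝ) + l) ^ (-(1/2) : ℝ) * Real.sqrt (2 * l) :=
            mul_le_mul_of_nonneg_left (sum_inv_sqrt_le l) (Real.rpow_nonneg hA.le _)
        _ ≤ Real.sqrt 2 := by
            have h1 : ((1:ℝ) + l) ^ (-(1/2) : ℝ) = (Real.sqrt (1 + l))⁻¹ := by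
              rw [Real.rpow_neg hA.le, Real.sqrt_eq_rpow]
            have h3 : (0:ℝ) < Real.sqrt (1 + l) := Real.sqrt_pos.mpr hA
            have h2 : Real.sqrt (2 * l) ≤ Real.sqrt (1 + l) * Real.sqrt 2 := by
              rw [← Real.sqrt_mul hA.le]
              exact Real.sqrt_le_sqrt (by nlinarith)
            rw [h1, inv_mul_le_iff₀ h3]
            exact h2
    have hpart2 : ∑ j ∈ Finset.range N, f (l + j) ≤ 1 + 1/(2*α) := by
      cases N with
      | zero =>
        simp only [Finset.range_zero, Finset.sum_empty]
        positivity
      | succ M =>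
        rw [Finset.sum_range_succ']
        have hfl : f (l + 0) ≤ 1 := by
          refine (hub1 (l + 0)).trans ?_
          have e1 : ((1:ℝ) + l) ^ (-(1/2) : ℝ) ≤ 1 :=
            Real.rpow_le_one_of_one_le_of_nonpos (by linarith) (by norm_num)
          have e2 : ((1:ℝ) + 2 * ((l:ℕ) + 0 : ℕ)) ^ (-(1/2) : ℝ) ≤ 1 :=
            Real.rpow_le_one_of_one_le_of_nonpos
              (by push_cast; linarith) (by norm_num)
          have e2' : (0:ℝ) ≤ ((1:ℝ) + 2 * ((l:ℕ) + 0 : ℕ)) ^ (-(1/2) : ℝ) :=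
            Real.rpow_nonneg (hEpos _).le _
          nlinarith [Real.rpow_nonneg hA.le (-(1/2) : ℝ)]
        have htail : ∑ j ∈ Finset.range M, f (l + (j + 1)) ≤ 1/(2*α) := by
          have hstep : ∀ j ∈ Finset.range M,
              f (l + (j + 1)) ≤ ((1:ℝ) + l) ^ α * ((1:ℝ) + 2 * (((l+1) + j : ℕ):ℝ)) ^ (-(α+1)) := by
            intro j _
            have : l + (j + 1) = (l + 1) + j := by omega
            rw [this]
            exact hub2 ((l+1) + j)
          calc ∑ j ∈ Finset.range M, f (l + (j + 1))
              ≤ ∑ j ∈ Finset.range M, ((1:ℝ) + l) ^ α * ((1:ℝ) + 2 * (((l+1) + j : ℕ):ℝ)) ^ (-(α+1)) :=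
                Finset.sum_le_sum hstep
            _ = ((1:ℝ) + l) ^ α * ∑ j ∈ Finset.range M, ((1:ℝ) + 2 * (((l+1) + j : ℕ):ℝ)) ^ (-(α+1)) := by
                rw [Finset.mul_sum]
            _ ≤ ((1:ℝ) + l) ^ α * ((1/(2*α)) * (2*((l+1:ℕ):ℝ)-1) ^ (-α)) :=
                mul_le_mul_of_nonneg_left (tail_sum_le hα (l+1) M (by omega))
                  (Real.rpow_nonneg hA.le _)
            _ ≤ 1/(2*α) := by
                have hcast : (2*((l+1:ℕ):ℝ)-1) = 2*(l:ℝ)+1 := by push_cast; ring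
                rw [hcast]
                have h1 : (2*(l:ℝ)+1) ^ (-α) ≤ ((1:ℝ) + l) ^ (-α) :=
                  Real.rpow_le_rpow_of_nonpos hA (by linarith) (by linarith)
                have h2 : ((1:ℝ) + l) ^ α * ((1:ℝ) + l) ^ (-α) = 1 := by
                  rw [← Real.rpow_add hA]; simp
                calc ((1:ℝ) + l) ^ α * ((1/(2*α)) * (2*(l:ℝ)+1) ^ (-α))
                    ≤ ((1:ℝ) + l) ^ α * ((1/(2*α)) * ((1:ℝ) + l) ^ (-α)) := by
                      apply mul_le_mul_of_nonneg_left _ (Real.rpow_nonneg hA.le _)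
                      exact mul_le_mul_of_nonneg_left h1 h2αinv.le
                  _ = 1/(2*α) := by rw [mul_comm (1/(2*α)), ← mul_assoc, h2, one_mul]
        linarith
    rw [hUdef]
    linarith
  have hsum : Summable f := summable_of_sum_range_le hf0 hpartial
  have htsumU : ∑' k, f k ≤ U := Real.tsum_le_of_sum_range_le hf0 hpartial
  have hUC : U ≤ C := by rw [hUdef, hCdef]; nlinarith
  -- lower bound
  have hlowterm : ∀ k, k ≤ l → 3 ^ (-α) * ((1:ℝ) + 4*l)⁻¹ ≤ f k := by
    intro k hk
    have hk0 : (0:ℝ) ≤ (k:ℝ) := Nat.cast_nonneg k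
    have hkl : (k:ℝ) ≤ (l:ℝ) := by exact_mod_cast hk
    have h4l : (0:ℝ) < 1 + 4*l := by positivity
    rw [hfg k]
    have hAB' : 3 ^ (-α) ≤ ((1:ℝ) + l) ^ α * ((1:ℝ) + l + 2 * k) ^ (-α) := by
      have h1 : ((3:ℝ) * (1 + l)) ^ (-α) ≤ ((1:ℝ) + l + 2 * k) ^ (-α) :=
        Real.rpow_le_rpow_of_nonpos (hBpos k) (by linarith) (by linarith)
      have h2 : ((3:ℝ) * (1 + l)) ^ (-α) = 3 ^ (-α) * ((1:ℝ) + l) ^ (-α) :=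
        Real.mul_rpow (by norm_num) hA.le
      have h3 : ((1:ℝ) + l) ^ α * (3 ^ (-α) * ((1:ℝ) + l) ^ (-α)) = 3 ^ (-α) := by
        rw [mul_comm ((3:ℝ) ^ (-α)), ← mul_assoc, ← Real.rpow_add hA]
        simp
      calc (3:ℝ) ^ (-α) = ((1:ℝ) + l) ^ α * (3 ^ (-α) * ((1:ℝ) + l) ^ (-α)) := h3.symm
        _ = ((1:ℝ) + l) ^ α * ((3:ℝ) * (1 + l)) ^ (-α) := by rw [h2]
        _ ≤ ((1:ℝ) + l) ^ α * ((1:ℝ) + l + 2 * k) ^ (-α) :=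
            mul_le_mul_of_nonneg_left h1 (Real.rpow_nonneg hA.le _)
    have hD : ((1:ℝ) + 4*l) ^ (-(1/2) : ℝ) ≤ ((1:ℝ) + 2 * l + 2 * k) ^ (-(1/2) : ℝ) :=
      Real.rpow_le_rpow_of_nonpos (hDpos k) (by linarith) (by norm_num)
    have hE : ((1:ℝ) + 4*l) ^ (-(1/2) : ℝ) ≤ ((1:ℝ) + 2 * k) ^ (-(1/2) : ℝ) :=
      Real.rpow_le_rpow_of_nonpos (hEpos k) (by linarith) (by norm_num)
    have hhalf : ((1:ℝ) + 4*l) ^ (-(1/2) : ℝ) * ((1:ℝ) + 4*l) ^ (-(1/2) : ℝ) = ((1:ℝ) + 4*l)⁻¹ := by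
      rw [← Real.rpow_add h4l]
      norm_num [Real.rpow_neg_one]
    have hDpos' : (0:ℝ) ≤ ((1:ℝ) + 2*l + 2*k) ^ (-(1/2) : ℝ) := Real.rpow_nonneg (hDpos k).le _
    have h4lpow : (0:ℝ) ≤ ((1:ℝ) + 4*l) ^ (-(1/2) : ℝ) := Real.rpow_nonneg h4l.le _
    have h3neg : (0:ℝ) ≤ (3:ℝ) ^ (-α) := Real.rpow_nonneg (by norm_num) _
    calc 3 ^ (-α) * ((1:ℝ) + 4*l)⁻¹
        = 3 ^ (-α) * (((1:ℝ) + 4*l) ^ (-(1/2) : ℝ) * ((1:ℝ) + 4*l) ^ (-(1/2) : ℝ)) := by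
          rw [hhalf]
      _ ≤ (((1:ℝ) + l) ^ α * ((1:ℝ) + l + 2 * k) ^ (-α)) *
          (((1:ℝ) + 2*l + 2*k) ^ (-(1/2) : ℝ) * ((1:ℝ) + 2 * k) ^ (-(1/2) : ℝ)) := by
          apply mul_le_mul hAB' _ (by positivity) (le_trans h3neg hAB')
          exact mul_le_mul hD hE h4lpow hDpos'
      _ = ((1:ℝ) + l) ^ α * ((1:ℝ) + l + 2 * k) ^ (-α) *
          ((1:ℝ) + 2*l + 2*k) ^ (-(1/2) : ℝ) * ((1:ℝ) + 2 * k) ^ (-(1/2) : ℝ) := by ring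
  have hlowsum : 3 ^ (-α) / 4 ≤ ∑' k, f k := by
    have h4l : (0:ℝ) < 1 + 4*l := by positivity
    have h3neg : (0:ℝ) < (3:ℝ) ^ (-α) := Real.rpow_pos_of_pos (by norm_num) _
    have hfin : ((l:ℝ) + 1) * (3 ^ (-α) * ((1:ℝ) + 4*l)⁻¹) ≤ ∑ k ∈ Finset.range (l+1), f k := by
      have := Finset.card_nsmul_le_sum (Finset.range (l+1))
        f (3 ^ (-α) * ((1:ℝ) + 4*l)⁻¹)
        (fun i hi => hlowterm i (by simp at hi; omega))
      simpa [Finset.card_range, nsmul_eq_mul, add_comm, push_cast] using this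
    have hq : 3 ^ (-α) / 4 ≤ ((l:ℝ) + 1) * (3 ^ (-α) * ((1:ℝ) + 4*l)⁻¹) := by
      rw [div_le_iff₀ (by norm_num : (0:ℝ) < 4)]
      have hinv : ((1:ℝ) + 4*l)⁻¹ * (1 + 4*l) = 1 := inv_mul_cancel₀ h4l.ne'
      have h1 : (1:ℝ) + 4*(l:ℝ) ≤ 4 * ((l:ℝ)+1) := by linarith
      calc (3:ℝ) ^ (-α) = 3 ^ (-α) * (((1:ℝ) + 4*l)⁻¹ * (1 + 4*l)) := by rw [hinv, mul_one]
        _ ≤ 3 ^ (-α) * (((1:ℝ) + 4*l)⁻¹ * (4 * ((l:ℝ)+1))) := by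
            apply mul_le_mul_of_nonneg_left _ h3neg.le
            exact mul_le_mul_of_nonneg_left h1 (by positivity)
        _ = ((l:ℝ) + 1) * (3 ^ (-α) * ((1:ℝ) + 4*l)⁻¹) * 4 := by ring
    refine hq.trans (hfin.trans ?_)
    exact Summable.sum_le_tsum (Finset.range (l+1)) (fun i _ => hf0 i) hsum
  have hClow : C⁻¹ ≤ 3 ^ (-α) / 4 := by
    have h3 : (3:ℝ) ^ (-α) = ((3:ℝ) ^ α)⁻¹ := by
      rw [Real.rpow_neg (by norm_num)]
    rw [h3]
    have h43 : (0:ℝ) < 4 * 3 ^ α := by positivity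
    have hC43 : 4 * 3 ^ α ≤ C := by rw [hCdef]; nlinarith
    have := inv_anti₀ h43 hC43
    calc C⁻¹ ≤ (4 * 3 ^ α)⁻¹ := this
      _ = ((3:ℝ) ^ α)⁻¹ / 4 := by
        rw [mul_inv]; ring
  exact ⟨hsum, hClow.trans hlowsum, htsumU.trans hUC⟩
end
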